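/- Let P and Q be orthogonal projections on a Hilbert space acting in generic position on a 2-dimensional space, with P = [[0,0],[0,1]] and Q = [[1-|γ|², γ√(1-|γ|²)],[conj(γ)√(1-|γ|²), |γ|²]] in some orthonormal basis, where γ = e^{iθ}cos(x) with 0 < x < π/2. Then the self-adjoint matrix X = [[0, -ix e^{iθ}],[ix e^{-iθ}, 0]] satisfies ‖X‖ = x, X is codiagonal with respect to P (PXP = (1-P)X(1-P) = 0), and e^{iX} P e^{-iX} = Q. -/

import Mathlib

open Complex

lemma exp_conj_of (U A V : Matrix (Fin 2) (Fin 2) ℂ) (h1 : U * V = 1) (h2 : V * U = 1) :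
    NormedSpace.exp (U * A * V) = U * NormedSpace.exp A * V := by
  simpa using Matrix.exp_units_conj (Units.mk U V h1 h2) A

lemma diag_two (a b : ℂ) : Matrix.diagonal ![a, b] = !![a, 0; 0, b] := by
  ext i j; fin_cases i <;> fin_cases j <;> simp [Matrix.diagonal]

lemma exp_diag_two (a b : ℂ) :
    NormedSpace.exp (Matrix.diagonal ![a, b]) = Matrix.diagonal ![Complex.exp a, Complex.exp b] := by
  rw [Matrix.exp_diagonal, Pi.exp_def]
  have : (fun i => NormedSpace.exp (![a, b] i)) = ![Complex.exp a, Complex.exp b] := by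
    funext i; fin_cases i <;> simp [Complex.exp_eq_exp_ℂ]
  rw [this]

lemma exp_key (θ x : ℝ) :
    NormedSpace.exp !![0, (x:ℂ) * Complex.exp (θ*Complex.I); -((x:ℂ)) * Complex.exp (-θ*Complex.I), 0]
      = !![(Real.cos x : ℂ), (Real.sin x : ℂ) * Complex.exp (θ*Complex.I);
           -((Real.sin x : ℂ)) * Complex.exp (-θ*Complex.I), (Real.cos x : ℂ)] := by
  set e : ℂ := Complex.exp (θ*Complex.I) with he'
  set f : ℂ := Complex.exp (-θ*Complex.I) with hf'
  set c : ℂ := (Real.cos x : ℂ) with hc'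
  set s : ℂ := (Real.sin x : ℂ) with hs'
  have hef : e * f = 1 := by
    rw [he', hf', ← Complex.exp_add]; ring_nf; exact Complex.exp_zero
  have hI := Complex.I_mul_I
  have ha : Complex.exp (Complex.I * x) = c + s * Complex.I := by
    rw [mul_comm, Complex.exp_mul_I, hc', hs']
    push_cast [Complex.ofReal_cos, Complex.ofReal_sin]
    ring
  have hb : Complex.exp (-(Complex.I * x)) = c - s * Complex.I := by
    have h : -(Complex.I * (x:ℂ)) = ((-x : ℝ) : ℂ) * Complex.I := by push_cast; ring
    rw [h, Complex.exp_mul_I, hc', hs']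
    push_cast [Complex.ofReal_cos, Complex.ofReal_sin]
    simp [Complex.cos_neg, Complex.sin_neg]
    ring
  have hexpD : NormedSpace.exp (Matrix.diagonal ![Complex.I * x, -(Complex.I * x)])
      = !![c + s*Complex.I, 0; 0, c - s*Complex.I] := by
    rw [exp_diag_two, diag_two, ha, hb]
  clear_value e f c s
  clear he' hf' hc' hs'
  set U : Matrix (Fin 2) (Fin 2) ℂ := !![-Complex.I*e, Complex.I*e; 1, 1] with hU
  set V : Matrix (Fin 2) (Fin 2) ℂ := !![Complex.I * f/2, 1/2; -Complex.I*f/2, 1/2] with hV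
  have h1 : U * V = 1 := by
    rw [hU, hV]
    ext i j
    fin_cases i
    · fin_cases j
      · simp [Matrix.mul_apply, Fin.sum_univ_two, Matrix.one_apply]
        linear_combination hef + (-(e*f)) * hI
      · simp [Matrix.mul_apply, Fin.sum_univ_two, Matrix.one_apply]
    · fin_cases j
      · simp [Matrix.mul_apply, Fin.sum_univ_two, Matrix.one_apply]; ring
      · simp [Matrix.mul_apply, Fin.sum_univ_two, Matrix.one_apply]; norm_num
  have h2 : V * U = 1 := by
    rw [hU, hV]
    ext i j
    fin_cases i
    · fin_cases j
      · simp [Matrix.mul_apply, Fin.sum_univ_two, Matrix.one_apply]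
        linear_combination (1/2 : ℂ) * hef + (-(e*f)/2) * hI
      · simp [Matrix.mul_apply, Fin.sum_univ_two, Matrix.one_apply]
        linear_combination (-(1:ℂ)/2) * hef + ((e*f)/2) * hI
    · fin_cases j
      · simp [Matrix.mul_apply, Fin.sum_univ_two, Matrix.one_apply]
        linear_combination (-(1:ℂ)/2) * hef + ((e*f)/2) * hI
      · simp [Matrix.mul_apply, Fin.sum_univ_two, Matrix.one_apply]
        linear_combination (1/2 : ℂ) * hef + (-(e*f)/2) * hI
  have hM : U * Matrix.diagonal ![Complex.I * x, -(Complex.I * x)] * V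
      = !![0, (x:ℂ) * e; -((x:ℂ)) * f, 0] := by
    rw [hU, hV, diag_two]
    ext i j
    fin_cases i
    · fin_cases j
      · simp [Matrix.mul_apply, Fin.sum_univ_two]
        all_goals ring
      · simp [Matrix.mul_apply, Fin.sum_univ_two]
        linear_combination (-((x:ℂ)*e)) * hI
    · fin_cases j
      · simp [Matrix.mul_apply, Fin.sum_univ_two]
        linear_combination ((x:ℂ)*f) * hI
      · simp [Matrix.mul_apply, Fin.sum_univ_two]
        all_goals ring
  rw [← hM, exp_conj_of _ _ _ h1 h2, hexpD, hU, hV]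
  ext i j
  fin_cases i
  · fin_cases j
    · simp [Matrix.mul_apply, Fin.sum_univ_two]
      linear_combination c * hef + (-(e*f*c)) * hI
    · simp [Matrix.mul_apply, Fin.sum_univ_two]
      linear_combination (-(s*e)) * hI
  · fin_cases j
    · simp [Matrix.mul_apply, Fin.sum_univ_two]
      linear_combination (s*f) * hI
    · simp [Matrix.mul_apply, Fin.sum_univ_two]; ring

set_option maxHeartbeats 1000000 in
set_option synthInstance.maxHeartbeats 400000 in
/-- For `γ = e^{iθ} cos x` with `0 < x < π/2`, the projections
`P = [[0,0],[0,1]]` and `Q = [[1-|γ|², γ√(1-|γ|²)],[conj γ √(1-|γ|²), |γ|²]]` are conjugate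
by `e^{iX}` where `X = [[0, -ix e^{iθ}],[ix e^{-iθ}, 0]]`; moreover `‖X‖ = x` (operator norm)
and `X` is codiagonal with respect to `P`. -/
theorem two_by_two_geodesic_exponent
    (θ x : ℝ) (hx0 : 0 < x) (hx : x < Real.pi / 2)
    (γ : ℂ) (hγ : γ = Complex.exp (θ * Complex.I) * Real.cos x)
    (P Q X : Matrix (Fin 2) (Fin 2) ℂ)
    (hP : P = !![0, 0; 0, 1])
    (hQ : Q = !![((1 - (‖γ‖)^2 : ℝ) : ℂ), γ * (Real.sqrt (1 - (‖γ‖)^2) : ℝ);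
        (starRingEnd ℂ) γ * (Real.sqrt (1 - (‖γ‖)^2) : ℝ), (((‖γ‖)^2 : ℝ) : ℂ)])
    (hX : X = !![0, -Complex.I * (x : ℂ) * Complex.exp (θ * Complex.I);
        Complex.I * (x : ℂ) * Complex.exp (-θ * Complex.I), 0]) :
    ‖Matrix.toEuclideanCLM (𝕜 := ℂ) X‖ = x ∧
      P * X * P = 0 ∧ (1 - P) * X * (1 - P) = 0 ∧
      NormedSpace.exp (Complex.I • X) * P * NormedSpace.exp (-(Complex.I • X)) = Q := by
  have hpi := Real.pi_pos
  have hcos : 0 < Real.cos x := Real.cos_pos_of_mem_Ioo ⟨by linarith, hx⟩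
  have hsin : 0 < Real.sin x := Real.sin_pos_of_pos_of_lt_pi hx0 (by linarith)
  have hI := Complex.I_mul_I
  have hef : Complex.exp (θ*Complex.I) * Complex.exp (-θ*Complex.I) = 1 := by
    rw [← Complex.exp_add]; ring_nf; exact Complex.exp_zero
  have hEF : Complex.exp (-((θ:ℂ)*Complex.I)) = Complex.exp (-(θ:ℂ)*Complex.I) := by
    rw [neg_mul]
  refine ⟨?_, ?_, ?_, ?_⟩
  · -- norm
    have hXstar : star X = X := by
      rw [hX]
      ext i j
      fin_cases i <;> fin_cases j <;>
        simp [Matrix.star_apply, ← Complex.exp_conj, map_mul, map_neg,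
          Complex.conj_I, Complex.conj_ofReal] <;> ring
    have hXsq : X * X = ((x:ℂ)^2) • (1 : Matrix (Fin 2) (Fin 2) ℂ) := by
      rw [hX]
      ext i j
      fin_cases i
      · fin_cases j
        · simp [Matrix.mul_apply, Fin.sum_univ_two, Matrix.smul_apply, Matrix.one_apply, hEF]
          linear_combination ((x:ℂ)^2) * hef + (-((x:ℂ)^2 * (Complex.exp (θ*Complex.I) * Complex.exp (-θ*Complex.I)))) * hI
        · simp [Matrix.mul_apply, Fin.sum_univ_two, Matrix.smul_apply, Matrix.one_apply, hEF]
      · fin_cases j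
        · simp [Matrix.mul_apply, Fin.sum_univ_two, Matrix.smul_apply, Matrix.one_apply, hEF]
        · simp [Matrix.mul_apply, Fin.sum_univ_two, Matrix.smul_apply, Matrix.one_apply, hEF]
          linear_combination ((x:ℂ)^2) * hef + (-((x:ℂ)^2 * (Complex.exp (θ*Complex.I) * Complex.exp (-θ*Complex.I)))) * hI
    set T := Matrix.toEuclideanCLM (𝕜 := ℂ) X with hT
    have hTstar : star T = T := by rw [hT, ← map_star, hXstar]
    have hT2 : T * T = ((x:ℂ)^2) • 1 := by
      rw [hT, ← map_mul, hXsq, map_smul, map_one]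
    have hnn : ‖T‖ * ‖T‖ = x^2 := by
      rw [← CStarRing.norm_star_mul_self, hTstar, hT2, ← Algebra.algebraMap_eq_smul_one,
        norm_algebraMap', norm_pow, Complex.norm_real, Real.norm_eq_abs, abs_of_pos hx0]
    nlinarith [norm_nonneg T, hnn, hx0]
  · rw [hP, hX]
    ext i j
    fin_cases i <;> fin_cases j <;>
      simp [Matrix.mul_apply, Fin.sum_univ_two]
  · rw [hP, hX]
    ext i j
    fin_cases i <;> fin_cases j <;>
      simp [Matrix.mul_apply, Fin.sum_univ_two, Matrix.sub_apply, Matrix.one_apply]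
  · -- exponential conjugation
    have hIX : Complex.I • X = !![0, (x:ℂ) * Complex.exp (θ*Complex.I);
        -((x:ℂ)) * Complex.exp (-θ*Complex.I), 0] := by
      rw [hX]
      ext i j
      fin_cases i
      · fin_cases j
        · simp
        · simp [Matrix.smul_apply, hEF]
          linear_combination (-((x:ℂ) * Complex.exp (θ*Complex.I))) * hI
      · fin_cases j
        · simp [Matrix.smul_apply, hEF]
          linear_combination ((x:ℂ) * Complex.exp (-θ*Complex.I)) * hI
        · simp
    have hnegIX : -(Complex.I • X) = !![0, ((-x : ℝ):ℂ) * Complex.exp (θ*Complex.I);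
        -(((-x : ℝ):ℂ)) * Complex.exp (-θ*Complex.I), 0] := by
      rw [hIX]
      ext i j
      fin_cases i <;> fin_cases j <;> simp [Matrix.neg_apply] <;> push_cast <;> ring
    have habs : ‖γ‖ = Real.cos x := by
      rw [hγ, norm_mul, Complex.norm_exp_ofReal_mul_I, Complex.norm_real, Real.norm_eq_abs, one_mul,
        abs_of_pos hcos]
    have hsqrt : Real.sqrt (1 - (‖γ‖)^2) = Real.sin x := by
      rw [habs]
      have : 1 - Real.cos x ^ 2 = Real.sin x ^ 2 := by
        have := Real.sin_sq_add_cos_sq x; linarith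
      rw [this, Real.sqrt_sq hsin.le]
    have hconj : (starRingEnd ℂ) γ = Complex.exp (-θ*Complex.I) * Real.cos x := by
      rw [hγ, map_mul, Complex.conj_ofReal, ← Complex.exp_conj]
      congr 1
      simp [map_mul, Complex.conj_I, Complex.conj_ofReal]
      all_goals ring
    have hsc : (Real.sin x : ℂ)^2 + (Real.cos x : ℂ)^2 = 1 := by
      exact_mod_cast Real.sin_sq_add_cos_sq x
    rw [hnegIX, hIX, exp_key θ x, exp_key θ (-x), hP, hQ, hsqrt, habs, hconj, hγ,
      Real.cos_neg, Real.sin_neg]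
    have hone : ((1 - Real.cos x^2 : ℝ) : ℂ) = 1 - (Real.cos x : ℂ)^2 := by
      push_cast; ring
    have hone2 : ((Real.cos x^2 : ℝ) : ℂ) = (Real.cos x : ℂ)^2 := by
      push_cast; ring
    ext i j
    fin_cases i
    have hef2 : Complex.exp ((θ:ℂ)*Complex.I) * Complex.exp (-((θ:ℂ)*Complex.I)) = 1 := by
      rw [hEF]; exact hef
    have hsc2 : Complex.sin (x:ℂ)^2 + Complex.cos (x:ℂ)^2 = 1 := Complex.sin_sq_add_cos_sq _
    have hone3 : ((1 - Real.cos x^2 : ℝ) : ℂ) = 1 - Complex.cos (x:ℂ)^2 := by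
      push_cast; ring
    · fin_cases j
      · simp [Matrix.mul_apply, Fin.sum_univ_two]
        linear_combination (Complex.sin (x:ℂ)^2) * hef2 + hsc2
      · simp [Matrix.mul_apply, Fin.sum_univ_two]
        all_goals ring
    · fin_cases j
      · simp [Matrix.mul_apply, Fin.sum_univ_two]
        all_goals ring
      · simp [Matrix.mul_apply, Fin.sum_univ_two]
        all_goals ring
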